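/- For all real numbers a and b, the integral over ℝ of Φ(a+bx)·φ(x) dx equals Φ(a/√(1+b²)), where Φ and φ are the CDF and PDF of the standard normal distribution. -/

import Mathlib

open MeasureTheory Real

/-- Standard normal PDF. -/
noncomputable def stdPDF (x : ℝ) : ℝ := (Real.sqrt (2 * Real.pi))⁻¹ * Real.exp (-(x ^ 2) / 2)

/-- Standard normal CDF. -/
noncomputable def stdCDF (x : ℝ) : ℝ := ∫ t in Set.Iic x, stdPDF t

lemma stdPDF_nonneg (x : ℝ) : 0 ≤ stdPDF x := by
  unfold stdPDF; positivity

lemma stdPDF_continuous : Continuous stdPDF := by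
  unfold stdPDF
  fun_prop

lemma stdPDF_integrable : Integrable stdPDF := by
  have h : Integrable (fun x : ℝ => Real.exp (-(1/2) * x ^ 2)) :=
    integrable_exp_neg_mul_sq (by norm_num)
  have : stdPDF = fun x => (Real.sqrt (2 * Real.pi))⁻¹ * Real.exp (-(1/2) * x ^ 2) := by
    funext x; unfold stdPDF; ring_nf
  rw [this]
  exact h.const_mul _

lemma stdPDF_le (x : ℝ) : stdPDF x ≤ (Real.sqrt (2 * Real.pi))⁻¹ := by
  unfold stdPDF
  have h1 : Real.exp (-(x ^ 2) / 2) ≤ 1 := by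
    rw [Real.exp_le_one_iff]; nlinarith [sq_nonneg x]
  have h2 : (0:ℝ) ≤ (Real.sqrt (2 * Real.pi))⁻¹ := by positivity
  nlinarith

lemma stdCDF_nonneg (x : ℝ) : 0 ≤ stdCDF x :=
  integral_nonneg fun t => stdPDF_nonneg t

lemma stdCDF_monotone : Monotone stdCDF := by
  intro x y hxy
  exact setIntegral_mono_set stdPDF_integrable.integrableOn
    (Filter.Eventually.of_forall stdPDF_nonneg)
    (HasSubset.Subset.eventuallyLE (Set.Iic_subset_Iic.mpr hxy))

/-- inner Gaussian product integral -/
lemma inner_int (b s : ℝ) :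
    ∫ x : ℝ, stdPDF (s + b * x) * stdPDF x
      = (Real.sqrt (1 + b ^ 2))⁻¹ * stdPDF (s / Real.sqrt (1 + b ^ 2)) := by
  have hc : (0:ℝ) < 1 + b ^ 2 := by positivity
  set c : ℝ := 1 + b ^ 2 with hcdef
  have hsc : Real.sqrt c ^ 2 = c := Real.sq_sqrt hc.le
  have hscpos : 0 < Real.sqrt c := Real.sqrt_pos.mpr hc
  have key : ∀ x : ℝ, stdPDF (s + b * x) * stdPDF x
      = ((Real.sqrt (2*Real.pi))⁻¹ * (Real.sqrt (2*Real.pi))⁻¹ * Real.exp (-(s^2/c) / 2))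
        * Real.exp (-(c/2) * (x + b*s/c) ^ 2) := by
    intro x
    unfold stdPDF
    have hexp : -((s + b*x) ^ 2) / 2 + -(x ^ 2) / 2
        = -(s^2/c) / 2 + -(c/2) * (x + b*s/c) ^ 2 := by
      field_simp
      ring
    rw [mul_mul_mul_comm, ← Real.exp_add, hexp, Real.exp_add]
    ring
  simp_rw [key]
  rw [integral_const_mul]
  have htrans : ∫ x : ℝ, Real.exp (-(c/2) * (x + b*s/c) ^ 2)
      = ∫ x : ℝ, Real.exp (-(c/2) * x ^ 2) :=
    integral_add_right_eq_self (fun x => Real.exp (-(c/2) * x ^ 2)) (b*s/c)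
  rw [htrans, integral_gaussian]
  have h1 : Real.sqrt (Real.pi / (c/2)) = Real.sqrt (2*Real.pi) / Real.sqrt c := by
    rw [← Real.sqrt_div' _ (by positivity)]
    · congr 1; field_simp
  have h2 : (s / Real.sqrt c) ^ 2 = s ^ 2 / c := by
    rw [div_pow, hsc]
  have h2pi : Real.sqrt (2*Real.pi) ^ 2 = 2 * Real.pi := Real.sq_sqrt (by positivity)
  rw [h1]
  unfold stdPDF
  rw [h2]
  have hs2pi : (0:ℝ) < Real.sqrt (2*Real.pi) := Real.sqrt_pos.mpr (by positivity)
  field_simp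

lemma scale_Iic (f : ℝ → ℝ) {c : ℝ} (hc : 0 < c) (a : ℝ) :
    ∫ s in Set.Iic a, c⁻¹ * f (s / c) = ∫ t in Set.Iic (a / c), f t := by
  have hne : c ≠ 0 := hc.ne'
  have hemb : MeasurableEmbedding (fun x : ℝ => c * x) :=
    (Homeomorph.mulLeft₀ c hne).measurableEmbedding
  have hpre : (fun x : ℝ => c * x) ⁻¹' Set.Iic a = Set.Iic (a / c) := by
    ext x; simp [Set.mem_Iic, le_div_iff₀ hc, mul_comm]
  have h1 : ∫ y in Set.Iic a, f (y / c) ∂(Measure.map (fun x : ℝ => c * x) volume)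
      = ∫ x in Set.Iic (a / c), f x := by
    rw [hemb.setIntegral_map (fun y => f (y / c)) (Set.Iic a), hpre]
    simp only [mul_div_cancel_left₀ _ hne]
  rw [Real.map_volume_mul_left hne] at h1
  rw [Measure.restrict_smul, integral_smul_measure] at h1
  rw [ENNReal.toReal_ofReal (abs_nonneg _), abs_of_pos (inv_pos.mpr hc)] at h1
  rw [integral_const_mul]
  simpa using h1

lemma lint_trans (g : ℝ → ENNReal) (a c : ℝ) :
    ∫⁻ t in Set.Iic (a + c), g t = ∫⁻ s in Set.Iic a, g (s + c) := by
  have hmp : MeasurePreserving (fun s : ℝ => s + c) volume volume :=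
    measurePreserving_add_right volume c
  have hemb : MeasurableEmbedding (fun s : ℝ => s + c) :=
    (Homeomorph.addRight c).measurableEmbedding
  have hpre : (fun s : ℝ => s + c) ⁻¹' Set.Iic (a + c) = Set.Iic a := by
    ext x; simp
  rw [← hmp.setLIntegral_comp_preimage_emb hemb, hpre]

theorem gaussian_cdf_smoothing (a b : ℝ) :
    (∫ x : ℝ, stdCDF (a + b * x) * stdPDF x) = stdCDF (a / Real.sqrt (1 + b ^ 2)) := by
  have hcpos : (0:ℝ) < Real.sqrt (1 + b ^ 2) := Real.sqrt_pos.mpr (by positivity)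
  set c : ℝ := Real.sqrt (1 + b ^ 2) with hcdef
  have hnn : ∀ x : ℝ, 0 ≤ stdCDF (a + b * x) * stdPDF x := fun x =>
    mul_nonneg (stdCDF_nonneg _) (stdPDF_nonneg _)
  have hmeas : Measurable fun x : ℝ => stdCDF (a + b * x) * stdPDF x :=
    (stdCDF_monotone.measurable.comp (by fun_prop)).mul stdPDF_continuous.measurable
  -- integrability of the inner product function in x, for each s
  have hF : ∀ s : ℝ, Integrable (fun x : ℝ => stdPDF (s + b * x) * stdPDF x) := by
    intro s
    refine (stdPDF_integrable.const_mul (Real.sqrt (2 * Real.pi))⁻¹).mono'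
      (((stdPDF_continuous.comp (by fun_prop)).mul stdPDF_continuous).aestronglyMeasurable) ?_
    filter_upwards with x
    rw [Real.norm_eq_abs, abs_of_nonneg (mul_nonneg (stdPDF_nonneg _) (stdPDF_nonneg _))]
    exact mul_le_mul_of_nonneg_right (stdPDF_le _) (stdPDF_nonneg _)
  -- pass to lintegrals
  rw [integral_eq_lintegral_of_nonneg_ae (Filter.Eventually.of_forall hnn)
    hmeas.aestronglyMeasurable]
  have key : (∫⁻ x : ℝ, ENNReal.ofReal (stdCDF (a + b * x) * stdPDF x))
      = ENNReal.ofReal (stdCDF (a / c)) := by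
    have step1 : ∀ x : ℝ, ENNReal.ofReal (stdCDF (a + b * x) * stdPDF x)
        = (∫⁻ s in Set.Iic a, ENNReal.ofReal (stdPDF (s + b * x))) * ENNReal.ofReal (stdPDF x) := by
      intro x
      rw [ENNReal.ofReal_mul (stdCDF_nonneg _)]
      congr 1
      rw [show stdCDF (a + b * x) = ∫ t in Set.Iic (a + b * x), stdPDF t from rfl,
        ofReal_integral_eq_lintegral_ofReal stdPDF_integrable.integrableOn
          (Filter.Eventually.of_forall stdPDF_nonneg),
        lint_trans]
    simp_rw [step1]
    have step2 : ∀ x : ℝ, (∫⁻ s in Set.Iic a, ENNReal.ofReal (stdPDF (s + b * x)))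
          * ENNReal.ofReal (stdPDF x)
        = ∫⁻ s in Set.Iic a, ENNReal.ofReal (stdPDF (s + b * x)) * ENNReal.ofReal (stdPDF x) := by
      intro x
      rw [lintegral_mul_const]
      exact ENNReal.measurable_ofReal.comp
        ((stdPDF_continuous.comp (by fun_prop)).measurable)
    simp_rw [step2]
    rw [lintegral_lintegral_swap]
    · have step3 : ∀ s : ℝ,
          (∫⁻ x : ℝ, ENNReal.ofReal (stdPDF (s + b * x)) * ENNReal.ofReal (stdPDF x))
          = ENNReal.ofReal (c⁻¹ * stdPDF (s / c)) := by
        intro s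
        calc (∫⁻ x : ℝ, ENNReal.ofReal (stdPDF (s + b * x)) * ENNReal.ofReal (stdPDF x))
            = ∫⁻ x : ℝ, ENNReal.ofReal (stdPDF (s + b * x) * stdPDF x) := by
              simp_rw [ENNReal.ofReal_mul (stdPDF_nonneg _)]
          _ = ENNReal.ofReal (∫ x : ℝ, stdPDF (s + b * x) * stdPDF x) :=
              (ofReal_integral_eq_lintegral_ofReal (hF s) (Filter.Eventually.of_forall
                fun x => mul_nonneg (stdPDF_nonneg _) (stdPDF_nonneg _))).symm
          _ = ENNReal.ofReal (c⁻¹ * stdPDF (s / c)) := by rw [inner_int]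
      simp_rw [step3]
      rw [← ofReal_integral_eq_lintegral_ofReal]
      · rw [scale_Iic stdPDF hcpos a]
        rfl
      · refine Integrable.integrableOn ?_
        have : (fun s : ℝ => c⁻¹ * stdPDF (s / c))
            = fun s : ℝ => c⁻¹ * stdPDF (c⁻¹ * s) := by
          funext s; rw [div_eq_inv_mul]
        rw [this]
        exact (stdPDF_integrable.comp_mul_left' (inv_ne_zero hcpos.ne')).const_mul _
      · exact Filter.Eventually.of_forall fun s =>
          mul_nonneg (by positivity) (stdPDF_nonneg _)
    · apply Measurable.aemeasurable
      apply Measurable.mul (f := fun p : ℝ × ℝ => ENNReal.ofReal (stdPDF (p.2 + b * p.1)))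
        (g := fun p : ℝ × ℝ => ENNReal.ofReal (stdPDF p.1))
      · exact ENNReal.measurable_ofReal.comp
          (stdPDF_continuous.comp (by fun_prop : Continuous fun p : ℝ × ℝ => p.2 + b * p.1)).measurable
      · exact ENNReal.measurable_ofReal.comp (stdPDF_continuous.measurable.comp measurable_fst)
  rw [key, ENNReal.toReal_ofReal (stdCDF_nonneg _)]
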